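/- Let (V,⟨·,·⟩,J) be a para/pseudo-Hermitian vector space of dimension m ≥ 4. The map σ : V* → ⊗³V* defined by σ(φ)(x,y;z) := φ(Jx)⟨y,z⟩ - φ(Jy)⟨x,z⟩ + φ(x)⟨Jy,z⟩ - φ(y)⟨Jx,z⟩ is injective. -/

import Mathlib

/-- `σ(φ)(x,y;z) := φ(Jx)⟨y,z⟩ - φ(Jy)⟨x,z⟩ + φ(x)⟨Jy,z⟩ - φ(y)⟨Jx,z⟩`. -/
def sigmaMap {V : Type*} [AddCommGroup V] [Module ℝ V]
    (B : V →ₗ[ℝ] V →ₗ[ℝ] ℝ) (J : V →ₗ[ℝ] V) (φ : V →ₗ[ℝ] ℝ) (x y z : V) : ℝ :=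
  φ (J x) * B y z - φ (J y) * B x z + φ x * B (J y) z - φ y * B (J x) z

lemma sigma_ker {V : Type*} [AddCommGroup V] [Module ℝ V] [FiniteDimensional ℝ V]
    (hm : 4 ≤ Module.finrank ℝ V)
    (B : V →ₗ[ℝ] V →ₗ[ℝ] ℝ) (hBs : ∀ x y, B x y = B y x)
    (hBn : ∀ v, (∀ w, B v w = 0) → v = 0)
    (J : V →ₗ[ℝ] V) (ε : ℝ) (hε : ε = 1 ∨ ε = -1)
    (hJ2 : ∀ x, J (J x) = ε • x)
    (hJB : ∀ x y, B (J x) (J y) = -ε * B x y)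
    (φ : V →ₗ[ℝ] ℝ) (h : ∀ x y z, sigmaMap B J φ x y z = 0) : φ = 0 := by
  by_contra hφ
  obtain ⟨y₀, ha⟩ : ∃ y₀, φ y₀ ≠ 0 := by
    by_contra hc; push_neg at hc; exact hφ (LinearMap.ext fun v => by simp [hc v])
  set a : ℝ := φ y₀ with ha_def
  set c : ℝ := -(φ (J y₀)) / a with hc_def
  set u : V := J y₀ - c • y₀ with hu_def
  have hw : ∀ x y, (φ (J x)) • y - (φ (J y)) • x + (φ x) • (J y) - (φ y) • (J x) = 0 := by
    intro x y
    apply hBn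
    intro z
    have hxyz := h x y z
    simp only [sigmaMap] at hxyz
    simp only [map_sub, map_add, map_smul, LinearMap.sub_apply, LinearMap.add_apply,
      LinearMap.smul_apply, smul_eq_mul, LinearMap.zero_apply, map_zero]
    linarith
  -- find a nonzero x₂ with φ x₂ = 0, φ (J x₂) = 0, B u x₂ = 0
  set f : V →ₗ[ℝ] ℝ × ℝ × ℝ := LinearMap.prod φ (LinearMap.prod (φ.comp J) (B u)) with hf_def
  have hker : LinearMap.ker f ≠ ⊥ := by
    intro hbot
    have h1 := LinearMap.finrank_range_add_finrank_ker f
    have h2 : Module.finrank ℝ (LinearMap.range f) ≤ Module.finrank ℝ (ℝ × ℝ × ℝ) :=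
      Submodule.finrank_le _
    have h3 : Module.finrank ℝ (ℝ × ℝ × ℝ) = 3 := by
      simp [Module.finrank_prod]
    rw [hbot, finrank_bot] at h1
    omega
  obtain ⟨x₂, hx₂mem, hx₂⟩ := Submodule.ne_bot_iff _ |>.mp hker
  have hmem := LinearMap.mem_ker.mp hx₂mem
  have hφx₂ : φ x₂ = 0 := congrArg Prod.fst hmem
  have hφJx₂ : φ (J x₂) = 0 := congrArg Prod.fst (congrArg Prod.snd hmem)
  have hBux₂ : B u x₂ = 0 := congrArg Prod.snd (congrArg Prod.snd hmem)
  -- Step 1 : J x₂ = c • x₂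
  have hac : a * c = -(φ (J y₀)) := by
    rw [hc_def, mul_div_assoc', mul_comm, mul_div_assoc, div_self ha, mul_one]
  have hJx₂ : J x₂ = c • x₂ := by
    have H := hw x₂ y₀
    rw [hφJx₂, hφx₂] at H
    have H2 : a • (J x₂) = a • (c • x₂) := by
      rw [smul_smul, hac]
      linear_combination (norm := module) -H
    exact smul_right_injective V ha H2
  -- Step 2 : φ ∘ J = -c • φ
  have hφJ : ∀ x, φ (J x) = -c * φ x := by
    intro x
    have H := hw x x₂
    rw [hφx₂, hφJx₂, hJx₂] at H
    have H2 : (φ (J x) + φ x * c) • x₂ = 0 := by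
      linear_combination (norm := module) H
    rcases smul_eq_zero.mp H2 with h0 | h0
    · linarith
    · exact absurd h0 hx₂
  -- Step 3 : a • J y = (a*c) • y + (φ y) • u
  have hJy : ∀ y, a • (J y) = (a * c) • y + (φ y) • u := by
    intro y
    have H := hw y₀ y
    rw [hφJ y₀, hφJ y, ← ha_def] at H
    rw [hu_def]
    linear_combination (norm := module) H
  -- Step 4 : c * c = ε
  have hc2 : c * c = ε := by
    have H := hJ2 x₂
    rw [hJx₂, map_smul, hJx₂, smul_smul] at H
    have H2 : (c * c - ε) • x₂ = 0 := by
      rw [sub_smul, H, sub_self]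
    rcases smul_eq_zero.mp H2 with h0 | h0
    · linarith
    · exact absurd h0 hx₂
  -- Step 5 : B x₂ y = 0 for all y
  have hεne : ε ≠ 0 := by rcases hε with h0 | h0 <;> rw [h0] <;> norm_num
  have hB0 : ∀ y, B x₂ y = 0 := by
    intro y
    have H := hJB x₂ y
    rw [hJx₂, map_smul, LinearMap.smul_apply, smul_eq_mul] at H
    -- compute B x₂ (J y)
    have H3 : a * B x₂ (J y) = a * (c * B x₂ y) := by
      have := congrArg (B x₂) (hJy y)
      rw [map_smul, map_add, map_smul, map_smul, smul_eq_mul, smul_eq_mul, smul_eq_mul] at this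
      rw [hBs x₂ u, hBux₂] at this
      linarith
    have H4 : B x₂ (J y) = c * B x₂ y := mul_left_cancel₀ ha H3
    rw [H4] at H
    have : (2 * ε) * B x₂ y = 0 := by linear_combination H - B x₂ y * hc2
    have h2ε : (2 : ℝ) * ε ≠ 0 := mul_ne_zero two_ne_zero hεne
    exact (mul_eq_zero.mp this).resolve_left h2ε
  exact hx₂ (hBn x₂ hB0)

/-- for `m = dim V ≥ 4`, the map `σ : V* → ⊗³V*` is injective. -/
theorem statement7 {V : Type*} [AddCommGroup V] [Module ℝ V] [FiniteDimensional ℝ V]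
    (hm : 4 ≤ Module.finrank ℝ V)
    (B : V →ₗ[ℝ] V →ₗ[ℝ] ℝ) (hBs : ∀ x y, B x y = B y x)
    (hBn : ∀ v, (∀ w, B v w = 0) → v = 0)
    (J : V →ₗ[ℝ] V) (ε : ℝ) (hε : ε = 1 ∨ ε = -1)
    (hJ2 : ∀ x, J (J x) = ε • x)
    (hJB : ∀ x y, B (J x) (J y) = -ε * B x y) :
    Function.Injective fun (φ : V →ₗ[ℝ] ℝ) => fun x y z => sigmaMap B J φ x y z := by
  intro φ₁ φ₂ hEq
  have hpt : ∀ x y z, sigmaMap B J φ₁ x y z = sigmaMap B J φ₂ x y z := by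
    intro x y z
    exact congrFun (congrFun (congrFun hEq x) y) z
  have hzero : ∀ x y z, sigmaMap B J (φ₁ - φ₂) x y z = 0 := by
    intro x y z
    have := hpt x y z
    simp only [sigmaMap, LinearMap.sub_apply] at *
    ring_nf
    linarith
  have := sigma_ker hm B hBs hBn J ε hε hJ2 hJB (φ₁ - φ₂) hzero
  exact sub_eq_zero.mp this
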